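/- For every p in the open interval (1/2, 1), the function w ↦ (1 - w^{p-1/2})(1 - w) / ((1 - w^p)(1 - w^{1-p})) is bounded above on the interval (0, 1); that is, its supremum over w ∈ (0,1) is finite. -/

import Mathlib

/-- The function `w ↦ (1 - w^(p-1/2))(1 - w) / ((1 - w^p)(1 - w^(1-p)))` is bounded
above on `(0,1)` for every `p ∈ (1/2,1)`. -/
theorem stmt_3 (p : ℝ) (hp : p ∈ Set.Ioo (1 / 2 : ℝ) 1) :
    BddAbove ((fun w : ℝ =>
        (1 - w ^ (p - 1 / 2)) * (1 - w) /
          ((1 - w ^ p) * (1 - w ^ (1 - p)))) '' Set.Ioo (0 : ℝ) 1) := by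
  obtain ⟨hp1, hp2⟩ := hp
  refine ⟨1 / (1 - p), ?_⟩
  rintro x ⟨w, ⟨hw0, hw1⟩, rfl⟩
  have hwp : w ^ p < 1 := Real.rpow_lt_one hw0.le hw1 (by linarith)
  have hwp0 : (0:ℝ) < 1 - w ^ p := by linarith
  have hw1' : (0:ℝ) < 1 - w := by linarith
  have hp1p : (0:ℝ) < 1 - p := by linarith
  -- numerator bound: w^p ≤ w^(p-1/2) so 1 - w^(p-1/2) ≤ 1 - w^p
  have hnum : (1 - w ^ (p - 1/2)) * (1 - w) ≤ (1 - w ^ p) * (1 - w) := by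
    have : w ^ p ≤ w ^ (p - 1/2) :=
      Real.rpow_le_rpow_of_exponent_ge hw0 hw1.le (by linarith)
    nlinarith
  -- denominator bound: 1 - w^(1-p) ≥ (1-p)(1-w) (Bernoulli)
  have hden : (1 - p) * (1 - w) ≤ 1 - w ^ (1 - p) := by
    have hb := rpow_one_add_le_one_add_mul_self (s := w - 1) (by linarith)
      hp1p.le (by linarith : 1 - p ≤ 1)
    have : w ^ (1 - p) ≤ 1 + (1 - p) * (w - 1) := by
      simpa using hb
    nlinarith
  have hden0 : (0:ℝ) < (1 - w ^ p) * ((1 - p) * (1 - w)) := by positivity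
  calc (1 - w ^ (p - 1/2)) * (1 - w) / ((1 - w ^ p) * (1 - w ^ (1 - p)))
      ≤ (1 - w ^ p) * (1 - w) / ((1 - w ^ p) * ((1 - p) * (1 - w))) := by
        apply div_le_div₀ (by positivity) hnum hden0
        exact mul_le_mul_of_nonneg_left hden hwp0.le
    _ = 1 / (1 - p) := by field_simp
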